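/- (Theorem, part i, forward direction.) Let W be an OSDNP-feasible subset of V and let x_W : V → {0,1} be its indicator (x_W(v) = 1 iff v ∈ W). Then x_W is (P)-feasible, and moreover d_acc^{x_W}(u) = d_acc^W(u) for every u ∈ U. -/

import Mathlib

/-- `d_acc^W u`: the minimal access time from urban area `u` to a stop of `W`
(for nonempty finite `W` the infimum below is the minimum). -/
noncomputable def daccW {V U : Type*} (d : U → V → ℝ) (W : Finset V) (u : U) : ℝ :=
  sInf (d u '' ↑W)

/-- `d_acc u = d_acc^V u`: the minimal access time over all bus stops. -/
noncomputable def daccV {V U : Type*} [Fintype V] (d : U → V → ℝ) (u : U) : ℝ :=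
  daccW d Finset.univ u

/-- `d_acc^x u = min_{v ∈ D_u^k} (d u v + (1 − x v) * M)`, the big-M penalized
access time of constraint (2) of program (P), where
`D_u^k = {v | d u v ≤ k u * d_acc u}` (nonempty since `acc u ∈ D_u^k`). -/
noncomputable def daccX {V U : Type*} [Fintype V] (d : U → V → ℝ) (k : U → ℝ)
    (M : ℝ) (x : V → ℝ) (u : U) : ℝ :=
  sInf ((fun v => d u v + (1 - x v) * M) '' {v | d u v ≤ k u * daccV d u})

/-- The 0/1 indicator vector `x_W` of a subset `W` of `V`. -/
def indW {V : Type*} [DecidableEq V] (W : Finset V) (v : V) : ℝ :=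
  if v ∈ W then 1 else 0

/-- A nonempty subset `W ⊆ V` is OSDNP-feasible if (A) the access times do not
increase by more than the factors `k u`, (B) no origin/destination delay increases
by more than the factor `α`, and (C) `|W| ≤ (1 − p_elim) * |V|`. -/
def OSDNPfeasible {V U : Type*} [Fintype V] (d : U → V → ℝ) (k : U → ℝ)
    (PC : V → V → ℝ) (acc : U → V) (α pelim : ℝ) (W : Finset V) : Prop :=
  W.Nonempty ∧
  (∀ u, daccW d W u ≤ k u * daccV d u) ∧
  (∀ u1 u2, daccW d W u1 + daccW d W u2 + PC (acc u1) (acc u2) ≤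
      α * (daccV d u1 + daccV d u2 + PC (acc u1) (acc u2))) ∧
  ((W.card : ℝ) ≤ (1 - pelim) * (Fintype.card V : ℝ))

/-- `x : V → {0,1}` is (P)-feasible if (1) every `u` has a retained stop in `D_u^k`,
(3) the delay constraints hold for `d_acc^x`, and (4) `∑_v x v ≤ (1 − p_elim) * |V|`. -/
def Pfeasible {V U : Type*} [Fintype V] [Fintype U] (d : U → V → ℝ) (k : U → ℝ)
    (PC : V → V → ℝ) (acc : U → V) (α pelim M : ℝ) (x : V → ℝ) : Prop :=
  (∀ u, ∃ v, d u v ≤ k u * daccV d u ∧ x v = 1) ∧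
  (∀ u1 u2, daccX d k M x u1 + daccX d k M x u2 + PC (acc u1) (acc u2) ≤
      α * (daccV d u1 + daccV d u2 + PC (acc u1) (acc u2))) ∧
  (∑ v, x v ≤ (1 - pelim) * (Fintype.card V : ℝ))

/-- Theorem, part i, forward direction: if `W` is OSDNP-feasible then its 0/1
indicator `x_W` is (P)-feasible, and moreover `d_acc^{x_W} u = d_acc^W u` for all `u`. -/
theorem stmt8 {V U : Type*} [Fintype V] [Nonempty V] [Fintype U] [DecidableEq V]
    (d : U → V → ℝ) (hd : ∀ u v, 0 ≤ d u v)
    (k : U → ℝ) (hk : ∀ u, 1 ≤ k u)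
    (PC : V → V → ℝ) (hPC : ∀ v1 v2, 0 ≤ PC v1 v2)
    (acc : U → V) (hacc : ∀ u, d u (acc u) = daccV d u)
    (α : ℝ) (hα : 1 ≤ α) (pelim : ℝ) (hp0 : 0 ≤ pelim) (hp1 : pelim ≤ 1)
    (OD : U → U → ℕ)
    (M : ℝ) (hM : ∀ u v, d u v ≤ M)
    (W : Finset V) (hW : OSDNPfeasible d k PC acc α pelim W) :
    Pfeasible d k PC acc α pelim M (indW W) ∧
      ∀ u, daccX d k M (indW W) u = daccW d W u := by
  obtain ⟨hne, hA, hB, hC⟩ := hW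
  -- For each u, find a minimizer w0 of daccW and prove the key equality.
  have key : ∀ u, (∃ w0 ∈ W, d u w0 = daccW d W u) := by
    intro u
    have hfin : (d u '' ↑W).Finite := ((W : Set V).toFinite.image _)
    have hnes : (d u '' ↑W).Nonempty := ⟨d u hne.choose, ⟨hne.choose, hne.choose_spec, rfl⟩⟩
    have := hnes.csInf_mem hfin
    obtain ⟨w0, hw0, heq⟩ := this
    exact ⟨w0, hw0, heq⟩
  have hbddW : ∀ u, BddBelow (d u '' ↑W) := fun u => ((W : Set V).toFinite.image _).bddBelow
  have hmain : ∀ u, daccX d k M (indW W) u = daccW d W u := by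
    intro u
    obtain ⟨w0, hw0W, hw0⟩ := key u
    have hw0D : d u w0 ≤ k u * daccV d u := hw0 ▸ hA u
    set T := ((fun v => d u v + (1 - indW W v) * M) '' {v | d u v ≤ k u * daccV d u}) with hT
    have hTfin : T.Finite := (Set.toFinite _).image _
    have hmT : daccW d W u ∈ T := by
      refine ⟨w0, hw0D, ?_⟩
      simp [indW, hw0W, hw0]
    have hlb : ∀ y ∈ T, daccW d W u ≤ y := by
      rintro y ⟨v, hv, rfl⟩
      by_cases hvW : v ∈ W
      · have h1 : d u v ∈ d u '' ↑W := ⟨v, hvW, rfl⟩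
        have := csInf_le (hbddW u) h1
        simpa [indW, hvW, daccW] using this
      · have h1 : daccW d W u ≤ M := hw0 ▸ hM u w0
        have h2 : 0 ≤ d u v := hd u v
        simp only [indW, hvW, if_false]
        nlinarith
    exact le_antisymm (csInf_le hTfin.bddBelow hmT) (le_csInf ⟨_, hmT⟩ hlb)
  refine ⟨⟨?_, ?_, ?_⟩, hmain⟩
  · intro u
    obtain ⟨w0, hw0W, hw0⟩ := key u
    exact ⟨w0, hw0 ▸ hA u, by simp [indW, hw0W]⟩
  · intro u1 u2
    rw [hmain u1, hmain u2]
    exact hB u1 u2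
  · have : ∑ v, indW W v = (W.card : ℝ) := by
      simp [indW, Finset.sum_ite_mem]
    rw [this]
    exact hC
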